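/- Let X be a metric space, μ a measure over X, A ⊆ X nonempty, ζ: 𝒮 → [0,+∞] a gauge, and fix τ > 1. Assume that (1) μ is a regular measure, (2) every element of 𝒮_{μ,ζ} is closed and μ-measurable, (3) 𝒮_{μ,ζ} covers A finely, (4) A has a countable covering by open sets of finite μ-measure, and (5) there exist c ≥ 1 and η > 0 such that for every S ∈ 𝒮_{μ,ζ} there exists S̃ ∈ 𝒮 with Ŝ ⊆ S̃, diam(S̃) ≤ c·diam(S), and ζ(S̃) ≤ η·ζ(S), where Ŝ is the τ-enlargement of S. Then the restriction μ⌊A is absolutely continuous with respect to ψ_ζ⌊A if and only if μ({x ∈ A : F^ζ(μ,x) = +∞}) = 0. -/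

import Mathlib

open MeasureTheory Set ENNReal Filter

noncomputable section

/-- The subclass `𝒮_{μ,ζ}` of a class of sets `𝒮`, obtained by removing the sets `S`
where `ζ S = μ S = 0` or `ζ S = μ S = +∞`. -/
def goodClass {X : Type*} [MetricSpace X] (μ : OuterMeasure X) (𝒮 : Set (Set X))
    (ζ : Set X → ℝ≥0∞) : Set (Set X) :=
  {S ∈ 𝒮 | ¬ ((ζ S = 0 ∧ μ S = 0) ∨ (ζ S = ⊤ ∧ μ S = ⊤))}

/-- The quotient function `Q_{μ,ζ}`: equals `+∞` if `ζ S = 0`, `μ S / ζ S` if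
`0 < ζ S < +∞`, and `0` if `ζ S = +∞` (note `a / ⊤ = 0` in `ℝ≥0∞`). -/
def fedQuot {X : Type*} [MetricSpace X] (μ : OuterMeasure X) (ζ : Set X → ℝ≥0∞)
    (S : Set X) : ℝ≥0∞ :=
  if ζ S = 0 then ⊤ else μ S / ζ S

/-- A family of sets `ℱ` covers `A` finely: for every `a ∈ A` and every `ε > 0` there is
`S ∈ ℱ` containing `a` with `diam S < ε`. -/
def CoversFinely {X : Type*} [MetricSpace X] (ℱ : Set (Set X)) (A : Set X) : Prop :=
  ∀ a ∈ A, ∀ ε : ℝ≥0∞, 0 < ε → ∃ S ∈ ℱ, a ∈ S ∧ EMetric.diam S < ε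

/-- The Federer density `F^ζ(μ,x)`. -/
def federerDensity {X : Type*} [MetricSpace X] (μ : OuterMeasure X) (𝒮 : Set (Set X))
    (ζ : Set X → ℝ≥0∞) (x : X) : ℝ≥0∞ :=
  ⨅ (ε : ℝ≥0∞) (_ : 0 < ε),
    ⨆ (S : Set X) (_ : S ∈ goodClass μ 𝒮 ζ) (_ : x ∈ S) (_ : EMetric.diam S < ε),
      fedQuot μ ζ S

/-- The size-`δ` premeasure `φ_{ζ,δ}` of the Carathéodory construction. -/
def preCarMeasure {X : Type*} [MetricSpace X] (𝒮 : Set (Set X)) (ζ : Set X → ℝ≥0∞)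
    (δ : ℝ≥0∞) (R : Set X) : ℝ≥0∞ :=
  ⨅ (E : ℕ → Set X) (_ : ∀ j, E j ∈ 𝒮) (_ : ∀ j, EMetric.diam (E j) ≤ δ)
    (_ : R ⊆ ⋃ j, E j), ∑' j, ζ (E j)

/-- The Carathéodory measure `ψ_ζ`. -/
def carMeasure {X : Type*} [MetricSpace X] (𝒮 : Set (Set X)) (ζ : Set X → ℝ≥0∞)
    (R : Set X) : ℝ≥0∞ :=
  ⨆ (δ : ℝ≥0∞) (_ : 0 < δ), preCarMeasure 𝒮 ζ δ R

/-- The `τ`-enlargement `Ŝ` of a set `S`. -/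
def enlargement {X : Type*} [MetricSpace X] (μ : OuterMeasure X) (𝒮 : Set (Set X))
    (ζ : Set X → ℝ≥0∞) (τ : ℝ) (S : Set X) : Set X :=
  ⋃₀ {T ∈ goodClass μ 𝒮 ζ | (T ∩ S).Nonempty ∧
      EMetric.diam T ≤ ENNReal.ofReal τ * EMetric.diam S}

/-- `μ` is a regular (outer) measure: every set is contained in a `μ`-measurable set of
the same measure. -/
def IsRegularOM {X : Type*} [MetricSpace X] (μ : OuterMeasure X) : Prop :=
  ∀ E : Set X, ∃ F : Set X, E ⊆ F ∧ μ.IsCaratheodory F ∧ μ F = μ E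

/-- `μ` is a Borel (outer) measure: every Borel set is `μ`-measurable. -/
def IsBorelOM {X : Type*} [MetricSpace X] (μ : OuterMeasure X) : Prop :=
  ∀ E : Set X, MeasurableSet[borel X] E → μ.IsCaratheodory E

/-- `μ` is a Borel regular (outer) measure. -/
def IsBorelRegularOM {X : Type*} [MetricSpace X] (μ : OuterMeasure X) : Prop :=
  IsBorelOM μ ∧ ∀ E : Set X, ∃ B : Set X, E ⊆ B ∧ MeasurableSet[borel X] B ∧ μ B = μ E

/-- Carathéodory measurability of a set with respect to a set function. -/
def SetFnCaratheodory {X : Type*} (ν : Set X → ℝ≥0∞) (E : Set X) : Prop :=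
  ∀ T : Set X, ν T = ν (T ∩ E) + ν (T \ E)

/-- `μ⌊A << ν⌊A`: absolute continuity of the restrictions to `A`. -/
def AbsContOn {X : Type*} [MetricSpace X] (μ : OuterMeasure X) (ν : Set X → ℝ≥0∞)
    (A : Set X) : Prop :=
  ∀ E : Set X, ν (A ∩ E) = 0 → μ (A ∩ E) = 0

/-- `S` is σ-finite with respect to the set function `ν`. -/
def SigmaFiniteWrt {X : Type*} (ν : Set X → ℝ≥0∞) (S : Set X) : Prop :=
  ∃ E : ℕ → Set X, S ⊆ ⋃ j, E j ∧ ∀ j, ν (E j) < ⊤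

/-- The integral `∫_B f dν` with respect to an (outer) set function `ν`,
via the layer-cake formula. -/
def omIntegral {X : Type*} (ν : Set X → ℝ≥0∞) (B : Set X) (f : X → ℝ≥0∞) : ℝ≥0∞ :=
  ∫⁻ t in Set.Ioi (0 : ℝ), ν {x ∈ B | ENNReal.ofReal t < f x}

/-- The enlargement condition: there are `c ≥ 1` and `η > 0` such that every
`S ∈ 𝒮_{μ,ζ}` admits `S̃ ∈ 𝒮` with `Ŝ ⊆ S̃`, `diam S̃ ≤ c diam S` and `ζ S̃ ≤ η ζ S`. -/
def EnlCondition {X : Type*} [MetricSpace X] (μ : OuterMeasure X) (𝒮 : Set (Set X))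
    (ζ : Set X → ℝ≥0∞) (τ : ℝ) : Prop :=
  ∃ c : ℝ, 1 ≤ c ∧ ∃ η : ℝ, 0 < η ∧ ∀ S ∈ goodClass μ 𝒮 ζ, ∃ S' ∈ 𝒮,
    enlargement μ 𝒮 ζ τ S ⊆ S' ∧ EMetric.diam S' ≤ ENNReal.ofReal c * EMetric.diam S ∧
      ζ S' ≤ ENNReal.ofReal η * ζ S

/-- The gauge `ζ_α(S) = c_α (diam S)^α`. -/
def zetaDiam {X : Type*} [MetricSpace X] (cα α : ℝ) (S : Set X) : ℝ≥0∞ :=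
  ENNReal.ofReal cα * EMetric.diam S ^ α

/-- The family `ℱ` of closed subsets of `X`. -/
def closedSets (X : Type*) [MetricSpace X] : Set (Set X) := {S | IsClosed S}

/-- The family `ℱ_b` of closed balls of `X` (with positive radius). -/
def closedBalls (X : Type*) [MetricSpace X] : Set (Set X) :=
  {S | ∃ (y : X) (r : ℝ), 0 < r ∧ S = Metric.closedBall y r}

/-- The family `ℱ_o` of open balls of `X` (with positive radius). -/
def openBalls (X : Type*) [MetricSpace X] : Set (Set X) :=
  {S | ∃ (y : X) (r : ℝ), 0 < r ∧ S = Metric.ball y r}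

/-- The `α`-dimensional Hausdorff measure `ℋ^α` with normalizing constant `c_α`. -/
def hausdorffMeasureC (X : Type*) [MetricSpace X] (cα α : ℝ) : Set X → ℝ≥0∞ :=
  carMeasure (closedSets X) (zetaDiam cα α)

/-- The `α`-dimensional spherical Hausdorff measure `𝒮^α` with constant `c_α`. -/
def sphericalMeasureC (X : Type*) [MetricSpace X] (cα α : ℝ) : Set X → ℝ≥0∞ :=
  carMeasure (closedBalls X) (zetaDiam cα α)

/-- `X` is diametrically regular. -/
def DiametricallyRegular (X : Type*) [MetricSpace X] : Prop :=
  ∀ x : X, ∃ R > (0 : ℝ), ∃ δ > (0 : ℝ), ∀ y ∈ Metric.ball x R,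
    ContinuousOn (fun r : ℝ => EMetric.diam (Metric.ball y r)) (Set.Ioo 0 δ)

end
section Aux

variable {X : Type*} [MetricSpace X] {μ : MeasureTheory.OuterMeasure X}
  {𝒮 : Set (Set X)} {ζ : Set X → ℝ≥0∞}

lemma preCar_le_sum {δ : ℝ≥0∞} {R : Set X} (E : ℕ → Set X) (h1 : ∀ j, E j ∈ 𝒮)
    (h2 : ∀ j, EMetric.diam (E j) ≤ δ) (h3 : R ⊆ ⋃ j, E j) :
    preCarMeasure 𝒮 ζ δ R ≤ ∑' j, ζ (E j) := by
  unfold preCarMeasure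
  exact iInf_le_of_le E (iInf_le_of_le h1 (iInf_le_of_le h2 (iInf_le_of_le h3 le_rfl)))

lemma preCar_lt_iff {δ c : ℝ≥0∞} {R : Set X} :
    preCarMeasure 𝒮 ζ δ R < c ↔ ∃ E : ℕ → Set X, (∀ j, E j ∈ 𝒮) ∧
      (∀ j, EMetric.diam (E j) ≤ δ) ∧ R ⊆ ⋃ j, E j ∧ ∑' j, ζ (E j) < c := by
  simp only [preCarMeasure, iInf_lt_iff]
  tauto

lemma preCar_mono {δ : ℝ≥0∞} {R R' : Set X} (h : R ⊆ R') :
    preCarMeasure 𝒮 ζ δ R ≤ preCarMeasure 𝒮 ζ δ R' := by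
  refine le_iInf fun E => le_iInf fun h1 => le_iInf fun h2 => le_iInf fun h3 => ?_
  exact preCar_le_sum E h1 h2 (h.trans h3)

lemma preCar_anti {δ δ' : ℝ≥0∞} (h : δ ≤ δ') {R : Set X} :
    preCarMeasure 𝒮 ζ δ' R ≤ preCarMeasure 𝒮 ζ δ R := by
  refine le_iInf fun E => le_iInf fun h1 => le_iInf fun h2 => le_iInf fun h3 => ?_
  exact preCar_le_sum E h1 (fun j => (h2 j).trans h) h3

lemma preCar_le_car {δ : ℝ≥0∞} (hδ : 0 < δ) (R : Set X) :
    preCarMeasure 𝒮 ζ δ R ≤ carMeasure 𝒮 ζ R :=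
  le_iSup₂ (f := fun δ (_ : 0 < δ) => preCarMeasure 𝒮 ζ δ R) δ hδ

lemma car_mono {R R' : Set X} (h : R ⊆ R') : carMeasure 𝒮 ζ R ≤ carMeasure 𝒮 ζ R' :=
  iSup₂_mono fun _ _ => preCar_mono h

lemma car_le_iff {R : Set X} {c : ℝ≥0∞} :
    carMeasure 𝒮 ζ R ≤ c ↔ ∀ δ : ℝ≥0∞, 0 < δ → preCarMeasure 𝒮 ζ δ R ≤ c :=
  iSup₂_le_iff

end Aux
section Aux2

variable {X : Type*} [MetricSpace X] {μ : MeasureTheory.OuterMeasure X}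
  {𝒮 : Set (Set X)} {ζ : Set X → ℝ≥0∞}

/-- If the quotient is at most `k`, then `μ S ≤ (k+1) ζ S` for good `S`. -/
lemma mu_le_of_quot_le {S : Set X} (_hS : S ∈ goodClass μ 𝒮 ζ) {k : ℝ≥0∞} (hk : k ≠ ⊤)
    (h : fedQuot μ ζ S ≤ k) : μ S ≤ (k + 1) * ζ S := by
  unfold fedQuot at h
  rcases eq_or_ne (ζ S) 0 with h0 | h0
  · rw [if_pos h0] at h
    exact absurd (top_le_iff.mp (le_trans h le_top)).symm ((h.trans_lt hk.lt_top).ne)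
  rw [if_neg h0] at h
  rcases eq_or_ne (ζ S) ⊤ with ht | ht
  · rw [ht, ENNReal.mul_top (by simp)]
    exact le_top
  calc μ S ≤ k * ζ S := by
        rw [← ENNReal.div_le_iff h0 ht]; exact h
    _ ≤ (k + 1) * ζ S := by gcongr; exact le_self_add

/-- If the quotient is bigger than `M / c` and `μ S ≤ M`, then `ζ S ≤ c`. -/
lemma zeta_le_of_quot_gt {S : Set X} {M c : ℝ≥0∞} (h : M / c < fedQuot μ ζ S)
    (hμ : μ S ≤ M) : ζ S ≤ c := by
  by_contra hc
  push_neg at hc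
  have h0 : ζ S ≠ 0 := fun h' => by simp [h'] at hc
  have : fedQuot μ ζ S ≤ M / c := by
    rw [fedQuot, if_neg h0]
    calc μ S / ζ S ≤ M / ζ S := by gcongr
      _ ≤ M / c := ENNReal.div_le_div_left hc.le M
  exact absurd (h.trans_le this) (lt_irrefl _)

/-- If the quotient is bigger than `t` (finite positive), then `ζ S ≤ μ S / t`. -/
lemma zeta_le_div_of_quot_gt {S : Set X} {t : ℝ≥0∞} (ht0 : t ≠ 0) (htt : t ≠ ⊤)
    (h : t < fedQuot μ ζ S) : ζ S ≤ μ S / t := by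
  rcases eq_or_ne (ζ S) 0 with h0 | h0
  · simp [h0]
  rw [fedQuot, if_neg h0] at h
  rcases eq_or_ne (ζ S) ⊤ with hT | hT
  · rw [hT, ENNReal.div_top] at h
    exact absurd h (by simp)
  rw [ENNReal.le_div_iff_mul_le (Or.inl ht0) (Or.inl htt), mul_comm]
  exact ((ENNReal.lt_div_iff_mul_lt (Or.inl h0) (Or.inl hT)).mp h).le

/-- A good set with positive quotient has positive measure. -/
lemma mu_pos_of_quot_pos {S : Set X} (hS : S ∈ goodClass μ 𝒮 ζ)
    (h : 0 < fedQuot μ ζ S) : 0 < μ S := by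
  rcases eq_or_ne (ζ S) 0 with h0 | h0
  · rcases hS with ⟨-, hS⟩
    rcases eq_or_ne (μ S) 0 with hm | hm
    · exact absurd (Or.inl ⟨h0, hm⟩) hS
    · exact pos_iff_ne_zero.mpr hm
  · rw [fedQuot, if_neg h0] at h
    exact pos_iff_ne_zero.mpr fun hm => by simp [hm] at h

end Aux2
section Aux3

variable {X : Type*} [MetricSpace X] {μ : MeasureTheory.OuterMeasure X}
  {𝒮 : Set (Set X)} {ζ : Set X → ℝ≥0∞}

lemma absContOn_of_density_null {A : Set X}
    (hN : μ {x ∈ A | federerDensity μ 𝒮 ζ x = ⊤} = 0) :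
    AbsContOn μ (carMeasure 𝒮 ζ) A := by
  intro E hE
  set N := {x ∈ A | federerDensity μ 𝒮 ζ x = ⊤} with hNdef
  -- the sets of points with density quotient bounded by `k` at scale `(n+1)⁻¹`
  set C : ℕ × ℕ → Set X := fun p =>
    {x ∈ A ∩ E | ∀ S ∈ goodClass μ 𝒮 ζ, x ∈ S →
      EMetric.diam S < ((p.2 : ℝ≥0∞) + 1)⁻¹ → fedQuot μ ζ S ≤ (p.1 : ℝ≥0∞)} with hCdef
  have hcover : A ∩ E ⊆ N ∪ ⋃ p : ℕ × ℕ, C p := by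
    intro x hx
    rcases eq_or_ne (federerDensity μ 𝒮 ζ x) ⊤ with htop | hne
    · exact Or.inl ⟨hx.1, htop⟩
    right
    have hlt : federerDensity μ 𝒮 ζ x < ⊤ := hne.lt_top
    rw [federerDensity, iInf_lt_iff] at hlt
    obtain ⟨ε, hε⟩ := hlt
    rw [iInf_lt_iff] at hε
    obtain ⟨hε0, hsup⟩ := hε
    obtain ⟨k, hk⟩ := ENNReal.exists_nat_gt hsup.ne_top
    obtain ⟨n, hn⟩ := ENNReal.exists_inv_nat_lt hε0.ne'
    refine mem_iUnion.mpr ⟨(k, n), hx, fun S hS hxS hdiam => ?_⟩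
    have hdiam' : EMetric.diam S < ε := by
      exact lt_of_lt_of_le hdiam (le_trans (ENNReal.inv_le_inv.mpr (by simp)) hn.le)
    calc fedQuot μ ζ S
        ≤ ⨆ (S : Set X) (_ : S ∈ goodClass μ 𝒮 ζ) (_ : x ∈ S)
            (_ : EMetric.diam S < ε), fedQuot μ ζ S :=
          le_iSup₂_of_le S hS (le_iSup₂_of_le hxS hdiam' le_rfl)
      _ ≤ (k : ℝ≥0∞) := hk.le
  -- each piece has measure zero
  have hCnull : ∀ p : ℕ × ℕ, μ (C p) = 0 := by
    intro ⟨k, n⟩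
    set δ : ℝ≥0∞ := ((n : ℝ≥0∞) + 1)⁻¹ / 2 with hδdef
    have hδ0 : 0 < δ := ENNReal.div_pos (by simp [ENNReal.inv_ne_zero]) (by norm_num)
    have hδlt : δ < ((n : ℝ≥0∞) + 1)⁻¹ :=
      ENNReal.half_lt_self (by simp [ENNReal.inv_ne_zero]) (by simp [ENNReal.inv_ne_top])
    have hpre : preCarMeasure 𝒮 ζ δ (C (k, n)) = 0 := by
      refine le_antisymm ?_ zero_le
      calc preCarMeasure 𝒮 ζ δ (C (k, n))
          ≤ preCarMeasure 𝒮 ζ δ (A ∩ E) := preCar_mono fun x hx => hx.1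
        _ ≤ carMeasure 𝒮 ζ (A ∩ E) := preCar_le_car hδ0 _
        _ = 0 := hE
    refine le_antisymm (ENNReal.le_of_forall_pos_le_add fun ε hε _ => ?_) zero_le
    rw [zero_add]
    have hεd : (0 : ℝ≥0∞) < (ε : ℝ≥0∞) / ((k : ℝ≥0∞) + 1) :=
      ENNReal.div_pos (by exact_mod_cast hε.ne') (by simp)
    obtain ⟨F, hF1, hF2, hF3, hF4⟩ := preCar_lt_iff.mp (hpre ▸ hεd)
    calc μ (C (k, n)) ≤ μ (⋃ j, C (k, n) ∩ F j) := by
          refine μ.mono ?_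
          intro x hx
          obtain ⟨j, hj⟩ := mem_iUnion.mp (hF3 hx)
          exact mem_iUnion.mpr ⟨j, hx, hj⟩
      _ ≤ ∑' j, μ (C (k, n) ∩ F j) := measure_iUnion_le _
      _ ≤ ∑' j, ((k : ℝ≥0∞) + 1) * ζ (F j) := by
          refine ENNReal.tsum_le_tsum fun j => ?_
          rcases (C (k, n) ∩ F j).eq_empty_or_nonempty with hemp | ⟨x, hxC, hxF⟩
          · simp [hemp]
          by_cases hgood : F j ∈ goodClass μ 𝒮 ζ
          · refine le_trans (μ.mono inter_subset_right) ?_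
            exact mu_le_of_quot_le hgood (by simp)
              (hxC.2 _ hgood hxF ((hF2 j).trans_lt hδlt))
          · have : (ζ (F j) = 0 ∧ μ (F j) = 0) ∨ (ζ (F j) = ⊤ ∧ μ (F j) = ⊤) := by
              by_contra hcon
              exact hgood ⟨hF1 j, hcon⟩
            rcases this with ⟨-, hμ0⟩ | ⟨hζt, -⟩
            · exact le_trans (μ.mono inter_subset_right) (by simp [hμ0])
            · rw [hζt, ENNReal.mul_top (by simp)]; exact le_top
      _ = ((k : ℝ≥0∞) + 1) * ∑' j, ζ (F j) := ENNReal.tsum_mul_left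
      _ ≤ ((k : ℝ≥0∞) + 1) * ((ε : ℝ≥0∞) / ((k : ℝ≥0∞) + 1)) := mul_le_mul_right hF4.le _
      _ = (ε : ℝ≥0∞) := ENNReal.mul_div_cancel' (by simp) (by simp)
  -- conclude
  refine le_antisymm ?_ zero_le
  calc μ (A ∩ E) ≤ μ (N ∪ ⋃ p : ℕ × ℕ, C p) := μ.mono hcover
    _ ≤ μ N + μ (⋃ p : ℕ × ℕ, C p) := measure_union_le _ _
    _ ≤ 0 + ∑' p : ℕ × ℕ, μ (C p) := by
        gcongr
        · exact hN.le
        · exact measure_iUnion_le _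
    _ = 0 := by simp [hCnull]

end Aux3
section Aux4

variable {X : Type*} [MetricSpace X] {μ : MeasureTheory.OuterMeasure X}
  {𝒮 : Set (Set X)} {ζ : Set X → ℝ≥0∞}

lemma tsum_half_geo (ε : ℝ≥0∞) : ∑' j : ℕ, ε / 2 * 2⁻¹ ^ j = ε := by
  rw [ENNReal.tsum_mul_left, ENNReal.tsum_geometric, ENNReal.one_sub_inv_two, inv_inv,
    ENNReal.div_mul_cancel two_ne_zero ENNReal.ofNat_ne_top]

lemma car_iUnion_le (s : ℕ → Set X) :
    carMeasure 𝒮 ζ (⋃ j, s j) ≤ ∑' j, carMeasure 𝒮 ζ (s j) := by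
  refine car_le_iff.mpr fun δ hδ => ?_
  refine ENNReal.le_of_forall_pos_le_add fun ε hε hfin => ?_
  have hj : ∀ j, preCarMeasure 𝒮 ζ δ (s j) < ⊤ := fun j =>
    lt_of_le_of_lt ((preCar_le_car hδ _).trans (ENNReal.le_tsum j)) hfin
  have hεj : ∀ j : ℕ, (0 : ℝ≥0∞) < (ε : ℝ≥0∞) / 2 * 2⁻¹ ^ j := fun j => by
    refine ENNReal.mul_pos ?_ (by simp [pow_ne_zero, ENNReal.inv_ne_zero])
    exact (ENNReal.div_pos (by exact_mod_cast hε.ne') ENNReal.ofNat_ne_top).ne'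
  have hlt : ∀ j, preCarMeasure 𝒮 ζ δ (s j) <
      preCarMeasure 𝒮 ζ δ (s j) + (ε : ℝ≥0∞) / 2 * 2⁻¹ ^ j := fun j =>
    ENNReal.lt_add_right (hj j).ne (hεj j).ne'
  choose E hE1 hE2 hE3 hE4 using fun j => preCar_lt_iff.mp (hlt j)
  set e : ℕ ≃ ℕ × ℕ := (Denumerable.eqv (ℕ × ℕ)).symm with he
  have hcov : (⋃ j, s j) ⊆ ⋃ m, E (e m).1 (e m).2 := by
    intro x hx
    obtain ⟨j, hj'⟩ := mem_iUnion.mp hx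
    obtain ⟨i, hi⟩ := mem_iUnion.mp (hE3 j hj')
    exact mem_iUnion.mpr ⟨e.symm (j, i), by simpa [e.apply_symm_apply] using hi⟩
  calc preCarMeasure 𝒮 ζ δ (⋃ j, s j)
      ≤ ∑' m, ζ (E (e m).1 (e m).2) :=
        preCar_le_sum _ (fun m => hE1 _ _) (fun m => hE2 _ _) hcov
    _ = ∑' p : ℕ × ℕ, ζ (E p.1 p.2) := e.tsum_eq fun p => ζ (E p.1 p.2)
    _ = ∑' j, ∑' i, ζ (E j i) := ENNReal.tsum_prod (f := fun j i => ζ (E j i))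
    _ ≤ ∑' j, (preCarMeasure 𝒮 ζ δ (s j) + (ε : ℝ≥0∞) / 2 * 2⁻¹ ^ j) :=
        ENNReal.tsum_le_tsum fun j => (hE4 j).le
    _ = (∑' j, preCarMeasure 𝒮 ζ δ (s j)) + ∑' j, (ε : ℝ≥0∞) / 2 * 2⁻¹ ^ j :=
        ENNReal.tsum_add
    _ ≤ (∑' j, carMeasure 𝒮 ζ (s j)) + (ε : ℝ≥0∞) := by
        rw [tsum_half_geo]
        gcongr
        exact preCar_le_car hδ _

end Aux4
section Aux5

variable {X : Type*} [MetricSpace X] {μ : MeasureTheory.OuterMeasure X}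
  {𝒮 : Set (Set X)} {ζ : Set X → ℝ≥0∞}

open Classical in
lemma preCar_le_countable_cover {R : Set X} {δ : ℝ≥0∞} {ι : Type*} [Countable ι]
    (E : ι → Set X) (hE1 : ∀ i, E i ∈ 𝒮) (hE2 : ∀ i, EMetric.diam (E i) ≤ δ)
    (hcov : R ⊆ ⋃ i, E i) (P : ℕ → Set X) (hP1 : ∀ m, P m ∈ 𝒮)
    (hP2 : ∀ m, EMetric.diam (P m) ≤ δ) :
    preCarMeasure 𝒮 ζ δ R ≤ (∑' i, ζ (E i)) + ∑' m, ζ (P m) := by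
  obtain ⟨f, hf⟩ := Countable.exists_injective_nat ι
  set G : ℕ → Set X := fun n => if h : ∃ i, f i = n then E h.choose else P n with hG
  have hGf : ∀ i, G (f i) = E i := by
    intro i
    have h : ∃ i', f i' = f i := ⟨i, rfl⟩
    simp only [hG, dif_pos h]
    exact congrArg E (hf h.choose_spec)
  have h1 : ∀ n, G n ∈ 𝒮 := by
    intro n; by_cases h : ∃ i, f i = n
    · simp only [hG, dif_pos h]; exact hE1 _
    · simp only [hG, dif_neg h]; exact hP1 _
  have h2 : ∀ n, EMetric.diam (G n) ≤ δ := by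
    intro n; by_cases h : ∃ i, f i = n
    · simp only [hG, dif_pos h]; exact hE2 _
    · simp only [hG, dif_neg h]; exact hP2 _
  have h3 : R ⊆ ⋃ n, G n := by
    intro x hx
    obtain ⟨i, hi⟩ := mem_iUnion.mp (hcov hx)
    exact mem_iUnion.mpr ⟨f i, by rwa [hGf i]⟩
  refine (preCar_le_sum G h1 h2 h3).trans ?_
  set g : ℕ → ℝ≥0∞ := fun n => if ∃ i, f i = n then ζ (G n) else 0 with hg
  set h : ℕ → ℝ≥0∞ := fun n => if ∃ i, f i = n then 0 else ζ (P n) with hh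
  have hpt : ∀ n, ζ (G n) = g n + h n := by
    intro n; by_cases hc : ∃ i, f i = n
    · simp only [hg, hh, if_pos hc, add_zero]
    · simp only [hg, hh, if_neg hc, zero_add, hG, dif_neg hc]
  calc ∑' n, ζ (G n) = (∑' n, g n) + ∑' n, h n := by
        rw [← ENNReal.tsum_add]; exact tsum_congr hpt
    _ ≤ (∑' i, ζ (E i)) + ∑' m, ζ (P m) := by
        have hsupp : Function.support g ⊆ Set.range f := by
          intro n hn
          by_contra hr
          have hno : ¬ ∃ i, f i = n := by simpa [Set.range] using hr
          simp [hg, if_neg hno] at hn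
        have hgsum : (∑' n, g n) = ∑' i, ζ (E i) := by
          rw [← hf.tsum_eq hsupp]
          refine tsum_congr fun i => ?_
          simp only [hg]
          rw [if_pos (⟨i, rfl⟩ : ∃ i', f i' = f i), hGf i]
        have hhsum : (∑' n, h n) ≤ ∑' m, ζ (P m) := by
          refine ENNReal.tsum_le_tsum fun n => ?_
          simp only [hh]
          split_ifs
          · exact zero_le
          · exact le_rfl
        exact add_le_add hgsum.le hhsum

end Aux5
section Aux6

variable {X : Type*} [MetricSpace X] {μ : MeasureTheory.OuterMeasure X}
  {𝒮 : Set (Set X)} {ζ : Set X → ℝ≥0∞}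

lemma exists_good_of_density_top {x : X} (hx : federerDensity μ 𝒮 ζ x = ⊤)
    {ε t : ℝ≥0∞} (hε : 0 < ε) (ht : t ≠ ⊤) :
    ∃ S ∈ goodClass μ 𝒮 ζ, x ∈ S ∧ EMetric.diam S < ε ∧ t < fedQuot μ ζ S := by
  have hsup := iInf_eq_top.mp (iInf_eq_top.mp hx ε) hε
  have : t < ⨆ (S : Set X) (_ : S ∈ goodClass μ 𝒮 ζ) (_ : x ∈ S)
      (_ : EMetric.diam S < ε), fedQuot μ ζ S := by rw [hsup]; exact ht.lt_top
  simp only [lt_iSup_iff] at this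
  obtain ⟨S, hS, hxS, hd, hQ⟩ := this
  exact ⟨S, hS, hxS, hd, hQ⟩

lemma exists_padding {a : X} (hFa : federerDensity μ 𝒮 ζ a = ⊤) {V0 : Set X}
    (hV0 : IsOpen V0) (haV : a ∈ V0) (hV0fin : μ V0 < ⊤) {δ ε : ℝ≥0∞}
    (hδ : 0 < δ) (hε : 0 < ε) (hεt : ε ≠ ⊤) :
    ∃ P : ℕ → Set X, (∀ m, P m ∈ 𝒮) ∧ (∀ m, EMetric.diam (P m) ≤ δ) ∧
      ∑' m, ζ (P m) ≤ ε := by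
  obtain ⟨ρ, hρ, hball⟩ := Metric.isOpen_iff.mp hV0 a haV
  have hmin : 0 < min δ (ENNReal.ofReal ρ) := lt_min hδ (ENNReal.ofReal_pos.mpr hρ)
  have hcm : ∀ m : ℕ, (0 : ℝ≥0∞) < ε / 2 * 2⁻¹ ^ m := fun m => by
    refine ENNReal.mul_pos ?_ (by simp [pow_ne_zero, ENNReal.inv_ne_zero])
    exact (ENNReal.div_pos hε.ne' ENNReal.ofNat_ne_top).ne'
  have htm : ∀ m : ℕ, μ V0 / (ε / 2 * 2⁻¹ ^ m) ≠ ⊤ := fun m =>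
    (ENNReal.div_lt_top hV0fin.ne (hcm m).ne').ne
  choose P hP1 hP2 hP3 hP4 using fun m =>
    exists_good_of_density_top hFa (ε := min δ (ENNReal.ofReal ρ))
      (t := μ V0 / (ε / 2 * 2⁻¹ ^ m)) hmin (htm m)
  have hsub : ∀ m, P m ⊆ V0 := by
    intro m y hy
    refine hball ?_
    rw [Metric.mem_ball, ← edist_lt_ofReal]
    calc edist y a ≤ EMetric.diam (P m) := EMetric.edist_le_diam_of_mem hy (hP2 m)
      _ < ENNReal.ofReal ρ := (hP3 m).trans_le (min_le_right _ _)
  refine ⟨P, fun m => (hP1 m).1, fun m => ((hP3 m).trans_le (min_le_left _ _)).le, ?_⟩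
  calc ∑' m, ζ (P m) ≤ ∑' m : ℕ, ε / 2 * 2⁻¹ ^ m :=
        ENNReal.tsum_le_tsum fun m =>
          zeta_le_of_quot_gt (hP4 m) (μ.mono (hsub m))
    _ = ε := tsum_half_geo ε

end Aux6
section Aux7

variable {X : Type*} [MetricSpace X] {μ : MeasureTheory.OuterMeasure X}

omit [MetricSpace X] in
/-- Sum of outer measures of finitely many pairwise disjoint Carathéodory-measurable
subsets of `V` is at most `μ V`. -/
lemma sum_mu_finset_le {V : Set X} : ∀ (F : Finset (Set X)),
    ((F : Set (Set X)).PairwiseDisjoint id) → (∀ S ∈ F, μ.IsCaratheodory S) →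
    (∀ S ∈ F, S ⊆ V) → ∑ S ∈ F, μ S ≤ μ V := by
  classical
  intro F
  induction F using Finset.induction generalizing V with
  | empty => simp
  | @insert a F ha IH =>
    intro hdisj hcar hsub
    rw [Finset.sum_insert ha]
    have hcara := hcar a (Finset.mem_insert_self a F)
    have hVsplit : μ (V ∩ a) + μ (V \ a) = μ V := (hcara V).symm
    have h1 : μ a ≤ μ (V ∩ a) := by
      refine μ.mono ?_
      exact subset_inter (hsub a (Finset.mem_insert_self a F)) subset_rfl
    have h2 : ∑ S ∈ F, μ S ≤ μ (V \ a) := by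
      refine IH ?_ ?_ ?_
      · exact hdisj.subset (by simp only [Finset.coe_insert]; exact subset_insert _ _)
      · exact fun S hS => hcar S (Finset.mem_insert_of_mem hS)
      · intro S hS x hx
        refine ⟨hsub S (Finset.mem_insert_of_mem hS) hx, fun hxa => ?_⟩
        have hne : a ≠ S := fun h => ha (h ▸ hS)
        exact (hdisj (Finset.mem_insert_self a F) (by simp [hS])
          hne).le_bot ⟨hxa, hx⟩
    calc μ a + ∑ S ∈ F, μ S ≤ μ (V ∩ a) + μ (V \ a) := add_le_add h1 h2
      _ = μ V := hVsplit

omit [MetricSpace X] in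
lemma tsum_mu_le {u : Set (Set X)} {V : Set X} (hdisj : u.PairwiseDisjoint id)
    (hcar : ∀ S ∈ u, μ.IsCaratheodory S) (hsub : ∀ S ∈ u, S ⊆ V) :
    ∑' b : ↥u, μ (b : Set X) ≤ μ V := by
  rw [ENNReal.tsum_eq_iSup_sum]
  refine iSup_le fun F => ?_
  classical
  have himg := Finset.sum_image (s := F) (f := fun S : Set X => μ S)
    (g := fun b : ↥u => (b : Set X)) (fun x _ y _ h => Subtype.ext h)
  rw [← himg]
  refine sum_mu_finset_le _ ?_ ?_ ?_
  · refine hdisj.subset ?_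
    intro S hS
    simp only [Finset.coe_image, mem_image] at hS
    obtain ⟨b, -, rfl⟩ := hS
    exact b.2
  · intro S hS
    simp only [Finset.mem_image] at hS
    obtain ⟨b, -, rfl⟩ := hS
    exact hcar _ b.2
  · intro S hS
    simp only [Finset.mem_image] at hS
    obtain ⟨b, -, rfl⟩ := hS
    exact hsub _ b.2

omit [MetricSpace X] in
lemma countable_of_disjoint_pos {u : Set (Set X)} {V : Set X}
    (hdisj : u.PairwiseDisjoint id) (hcar : ∀ S ∈ u, μ.IsCaratheodory S)
    (hsub : ∀ S ∈ u, S ⊆ V) (hpos : ∀ S ∈ u, 0 < μ S) (hV : μ V < ⊤) :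
    u.Countable := by
  classical
  have hcov : u ⊆ ⋃ m : ℕ, {S ∈ u | ((m : ℝ≥0∞) + 1)⁻¹ ≤ μ S} := by
    intro S hS
    obtain ⟨m, hm⟩ := ENNReal.exists_inv_nat_lt (hpos S hS).ne'
    refine mem_iUnion.mpr ⟨m, hS, ?_⟩
    exact le_trans (ENNReal.inv_le_inv.mpr (by simp)) hm.le
  refine Set.Countable.mono hcov (Set.countable_iUnion fun m => Set.Finite.countable ?_)
  by_contra hinf
  rw [← Set.not_infinite, not_not] at hinf
  obtain ⟨N, hN⟩ := ENNReal.exists_nat_gt hV.ne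
  obtain ⟨t, ht_sub, ht_fin, ht_card⟩ := hinf.exists_subset_ncard_eq ((m + 1) * N)
  have hsum : ∑ S ∈ ht_fin.toFinset, μ S ≤ μ V := by
    refine sum_mu_finset_le _ ?_ ?_ ?_
    · exact hdisj.subset (by intro S hS; exact (ht_sub (by simpa using hS)).1)
    · exact fun S hS => hcar S (ht_sub (by simpa using hS)).1
    · exact fun S hS => hsub S (ht_sub (by simpa using hS)).1
  have hlow : (N : ℝ≥0∞) ≤ ∑ S ∈ ht_fin.toFinset, μ S := by
    have hcard : ht_fin.toFinset.card = (m + 1) * N := by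
      rw [← ht_card, Set.ncard_eq_toFinset_card _ ht_fin]
    calc (N : ℝ≥0∞) = (((m + 1) * N : ℕ) : ℝ≥0∞) * ((m : ℝ≥0∞) + 1)⁻¹ := by
          push_cast
          rw [mul_comm ((m : ℝ≥0∞) + 1), mul_assoc,
            ENNReal.mul_inv_cancel (by simp) (by simp), mul_one]
      _ = ht_fin.toFinset.card • ((m : ℝ≥0∞) + 1)⁻¹ := by rw [hcard, nsmul_eq_mul]
      _ ≤ ∑ S ∈ ht_fin.toFinset, μ S := by
          refine Finset.card_nsmul_le_sum _ _ _ fun S hS => ?_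
          exact (ht_sub (by simpa using hS)).2
  exact absurd (le_trans hlow hsum) (not_le.mpr hN)

end Aux7
section Aux8

variable {X : Type*} [MetricSpace X] {μ : MeasureTheory.OuterMeasure X}
  {𝒮 : Set (Set X)} {ζ : Set X → ℝ≥0∞} {τ : ℝ}

lemma car_null_of_top_density (hτ : 1 < τ)
    (h2 : ∀ S ∈ goodClass μ 𝒮 ζ, IsClosed S ∧ μ.IsCaratheodory S)
    (h5 : EnlCondition μ 𝒮 ζ τ)
    {V : Set X} (hVo : IsOpen V) (hVfin : μ V < ⊤)
    {B : Set X} (hBV : B ⊆ V) (hBtop : ∀ x ∈ B, federerDensity μ 𝒮 ζ x = ⊤)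
    (hpad : ∀ δ : ℝ≥0∞, 0 < δ → ∀ ε : ℝ≥0∞, 0 < ε → ε ≠ ⊤ →
      ∃ P : ℕ → Set X, (∀ m, P m ∈ 𝒮) ∧ (∀ m, EMetric.diam (P m) ≤ δ) ∧
        ∑' m, ζ (P m) ≤ ε) :
    carMeasure 𝒮 ζ B = 0 := by
  obtain ⟨c, hc, η, hη, h5'⟩ := h5
  have hc0 : (ENNReal.ofReal c) ≠ 0 := by
    rw [Ne, ENNReal.ofReal_eq_zero, not_le]; linarith
  have hct : (ENNReal.ofReal c) ≠ ⊤ := ENNReal.ofReal_ne_top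
  have hc1 : (1 : ℝ≥0∞) ≤ ENNReal.ofReal c := by
    rw [← ENNReal.ofReal_one]; exact ENNReal.ofReal_le_ofReal hc
  have main : ∀ n : ℕ, carMeasure 𝒮 ζ B ≤
      ENNReal.ofReal η * μ V / ((n : ℝ≥0∞) + 1) := by
    intro n
    set t : ℝ≥0∞ := (n : ℝ≥0∞) + 1 with ht_def
    have ht0 : t ≠ 0 := by simp [ht_def]
    have htt : t ≠ ⊤ := by simp [ht_def]
    have ht_pos : (0 : ℝ≥0∞) < t := pos_iff_ne_zero.mpr ht0
    refine car_le_iff.mpr fun δ hδ => ?_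
    refine ENNReal.le_of_forall_pos_le_add fun ε hε hfin => ?_
    set δ1 : ℝ≥0∞ := min δ 1 with hδ1_def
    have hδ1_0 : δ1 ≠ 0 := (lt_min hδ zero_lt_one).ne'
    have hδ1t : δ1 ≠ ⊤ := (min_le_right δ 1).trans_lt (by norm_num) |>.ne
    set δ' : ℝ≥0∞ := δ1 / ENNReal.ofReal c with hδ'_def
    have hδ'0 : δ' ≠ 0 := (ENNReal.div_pos hδ1_0 hct).ne'
    have hδ'le : δ' ≤ δ1 := by
      calc δ' ≤ δ1 / 1 := ENNReal.div_le_div_left hc1 δ1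
        _ = δ1 := div_one δ1
    have hδ't : δ' ≠ ⊤ := (hδ'le.trans_lt hδ1t.lt_top).ne
    set r : ℝ := δ'.toReal with hr_def
    set ℱ : Set (Set X) := {S | S ∈ goodClass μ 𝒮 ζ ∧ S ⊆ V ∧
      EMetric.diam S ≤ δ' ∧ t < fedQuot μ ζ S} with hℱ_def
    have hμpos : ∀ S ∈ ℱ, 0 < μ S := fun S hS =>
      mu_pos_of_quot_pos hS.1 (ht_pos.trans hS.2.2.2)
    have hne : ∀ S ∈ ℱ, (id S : Set X).Nonempty := by
      intro S hS
      rw [Set.nonempty_iff_ne_empty]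
      intro h
      have hp := hμpos S hS
      simp only [id_eq] at h
      rw [h] at hp
      simp at hp
    have hdiamle : ∀ S ∈ ℱ, Metric.diam S ≤ r := fun S hS =>
      ENNReal.toReal_mono hδ't hS.2.2.1
    obtain ⟨u, hu_sub, hu_disj, hu_cov⟩ :=
      Vitali.exists_disjoint_subfamily_covering_enlargement (id : Set X → Set X) ℱ
        Metric.diam τ hτ (fun a _ => Metric.diam_nonneg) r hdiamle hne
    have hu_good : ∀ b ∈ u, b ∈ goodClass μ 𝒮 ζ := fun b hb => (hu_sub hb).1
    have hu_count : u.Countable :=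
      countable_of_disjoint_pos hu_disj (fun S hS => (h2 S (hu_good S hS)).2)
        (fun S hS => (hu_sub hS).2.1) (fun S hS => hμpos S (hu_sub hS)) hVfin
    haveI := hu_count.to_subtype
    choose g hg1 hg2 hg3 hg4 using fun b : ↥u => h5' ↑b (hu_good ↑b b.2)
    have hgdiam : ∀ b : ↥u, EMetric.diam (g b) ≤ δ1 := by
      intro b
      refine (hg3 b).trans ?_
      calc ENNReal.ofReal c * EMetric.diam (b : Set X)
          ≤ ENNReal.ofReal c * δ' := by
            exact mul_le_mul_right (hu_sub b.2).2.2.1 _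
        _ = δ1 := ENNReal.mul_div_cancel hc0 hct
    have hcov : B ⊆ ⋃ b : ↥u, g b := by
      intro x hx
      obtain ⟨ρ, hρ, hball⟩ := Metric.isOpen_iff.mp hVo x (hBV hx)
      obtain ⟨S, hSg, hxS, hSd, hSq⟩ := exists_good_of_density_top (hBtop x hx)
        (ε := min δ' (ENNReal.ofReal ρ)) (t := t)
        (lt_min (pos_iff_ne_zero.mpr hδ'0) (ENNReal.ofReal_pos.mpr hρ)) htt
      have hSV : S ⊆ V := by
        intro y hy
        refine hball ?_
        rw [Metric.mem_ball, ← edist_lt_ofReal]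
        exact lt_of_le_of_lt (EMetric.edist_le_diam_of_mem hy hxS)
          (hSd.trans_le (min_le_right _ _))
      have hSdle : EMetric.diam S ≤ δ' := (hSd.trans_le (min_le_left _ _)).le
      have hSF : S ∈ ℱ := ⟨hSg, hSV, hSdle, hSq⟩
      obtain ⟨b, hb, hint, hdle⟩ := hu_cov S hSF
      have hSdiam_ne : EMetric.diam S ≠ ⊤ := (hSdle.trans_lt hδ't.lt_top).ne
      have hbdiam_ne : EMetric.diam (b : Set X) ≠ ⊤ :=
        ((hu_sub hb).2.2.1.trans_lt hδ't.lt_top).ne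
      have hed : EMetric.diam S ≤ ENNReal.ofReal τ * EMetric.diam b := by
        rw [← ENNReal.ofReal_toReal hSdiam_ne, ← ENNReal.ofReal_toReal hbdiam_ne,
          ← ENNReal.ofReal_mul (by linarith : (0 : ℝ) ≤ τ)]
        exact ENNReal.ofReal_le_ofReal hdle
      have hmem : x ∈ enlargement μ 𝒮 ζ τ b := ⟨S, ⟨hSg, hint, hed⟩, hxS⟩
      exact mem_iUnion.mpr ⟨⟨b, hb⟩, hg2 ⟨b, hb⟩ hmem⟩
    obtain ⟨P, hP1, hP2, hP3⟩ := hpad δ1 (pos_iff_ne_zero.mpr hδ1_0) ε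
      (by exact_mod_cast hε) ENNReal.coe_ne_top
    have hζg : ∑' b : ↥u, ζ (g b) ≤ ENNReal.ofReal η * μ V / t := by
      calc ∑' b : ↥u, ζ (g b)
          ≤ ∑' b : ↥u, ENNReal.ofReal η * ζ (b : Set X) :=
            ENNReal.tsum_le_tsum fun b => hg4 b
        _ = ENNReal.ofReal η * ∑' b : ↥u, ζ (b : Set X) := ENNReal.tsum_mul_left
        _ ≤ ENNReal.ofReal η * ∑' b : ↥u, μ (b : Set X) / t := by
            refine mul_le_mul_right (ENNReal.tsum_le_tsum fun b => ?_) _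
            exact zeta_le_div_of_quot_gt ht0 htt (hu_sub b.2).2.2.2
        _ = ENNReal.ofReal η * ((∑' b : ↥u, μ (b : Set X)) / t) := by
            simp only [div_eq_mul_inv, ENNReal.tsum_mul_right]
        _ ≤ ENNReal.ofReal η * (μ V / t) := by
            refine mul_le_mul_right (ENNReal.div_le_div_right ?_ t) _
            exact tsum_mu_le hu_disj (fun S hS => (h2 S (hu_good S hS)).2)
              (fun S hS => (hu_sub hS).2.1)
        _ = ENNReal.ofReal η * μ V / t := (mul_div_assoc _ _ _).symm
    calc preCarMeasure 𝒮 ζ δ B ≤ preCarMeasure 𝒮 ζ δ1 B :=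
          preCar_anti (min_le_left δ 1)
      _ ≤ (∑' b : ↥u, ζ (g b)) + ∑' m, ζ (P m) :=
          preCar_le_countable_cover g (fun b => hg1 b) hgdiam hcov P hP1 hP2
      _ ≤ ENNReal.ofReal η * μ V / t + (ε : ℝ≥0∞) := add_le_add hζg hP3
  rcases eq_or_ne (carMeasure 𝒮 ζ B) 0 with h0 | h0
  · exact h0
  exfalso
  set ψB := carMeasure 𝒮 ζ B with hψ_def
  set C := ENNReal.ofReal η * μ V with hC_def
  have hCt : C ≠ ⊤ := ENNReal.mul_ne_top ENNReal.ofReal_ne_top hVfin.ne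
  obtain ⟨n, hn⟩ := ENNReal.exists_nat_gt (ENNReal.div_lt_top hCt h0).ne
  have hlt : C / ((n : ℝ≥0∞) + 1) < ψB := by
    rw [ENNReal.div_lt_iff (Or.inl (by simp)) (Or.inl (by simp))]
    rcases eq_or_ne ψB ⊤ with hT | hT
    · rw [hT, ENNReal.top_mul (by simp)]
      exact hCt.lt_top
    · have h1 : C < (n : ℝ≥0∞) * ψB :=
        (ENNReal.div_lt_iff (Or.inl h0) (Or.inl hT)).mp hn
      refine h1.trans_le ?_
      rw [mul_comm]
      exact mul_le_mul_right (by simp) _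
  exact absurd (main n) (not_le.mpr hlt)

end Aux8

/-- characterization of absolute continuity. -/
theorem stmt2 {X : Type*} [MetricSpace X] (μ : MeasureTheory.OuterMeasure X)
    (𝒮 : Set (Set X)) (ζ : Set X → ℝ≥0∞) (A : Set X) (hA : A.Nonempty)
    (τ : ℝ) (hτ : 1 < τ)
    (h1 : IsRegularOM μ)
    (h2 : ∀ S ∈ goodClass μ 𝒮 ζ, IsClosed S ∧ μ.IsCaratheodory S)
    (h3 : CoversFinely (goodClass μ 𝒮 ζ) A)
    (h4 : ∃ U : ℕ → Set X, A ⊆ ⋃ j, U j ∧ ∀ j, IsOpen (U j) ∧ μ (U j) < ⊤)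
    (h5 : EnlCondition μ 𝒮 ζ τ) :
    AbsContOn μ (carMeasure 𝒮 ζ) A ↔
      μ {x ∈ A | federerDensity μ 𝒮 ζ x = ⊤} = 0 := by
  constructor
  · intro hac
    set N := {x ∈ A | federerDensity μ 𝒮 ζ x = ⊤} with hN_def
    have hNA : N ⊆ A := fun x hx => hx.1
    rcases N.eq_empty_or_nonempty with hemp | ⟨a, haA, haF⟩
    · rw [hemp]; exact measure_empty
    obtain ⟨U, hUcov, hU⟩ := h4
    obtain ⟨j0, hj0⟩ := mem_iUnion.mp (hUcov haA)
    have hpad : ∀ δ : ℝ≥0∞, 0 < δ → ∀ ε : ℝ≥0∞, 0 < ε → ε ≠ ⊤ →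
        ∃ P : ℕ → Set X, (∀ m, P m ∈ 𝒮) ∧ (∀ m, EMetric.diam (P m) ≤ δ) ∧
          ∑' m, ζ (P m) ≤ ε :=
      fun δ hδ ε hε hεt => exists_padding haF (hU j0).1 hj0 (hU j0).2 hδ hε hεt
    have hψ : carMeasure 𝒮 ζ N = 0 := by
      refine le_antisymm ?_ zero_le
      have hsub : N ⊆ ⋃ j, N ∩ U j := fun x hx => by
        obtain ⟨j, hj⟩ := mem_iUnion.mp (hUcov (hNA hx))
        exact mem_iUnion.mpr ⟨j, hx, hj⟩
      calc carMeasure 𝒮 ζ N ≤ carMeasure 𝒮 ζ (⋃ j, N ∩ U j) := car_mono hsub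
        _ ≤ ∑' j, carMeasure 𝒮 ζ (N ∩ U j) := car_iUnion_le _
        _ = 0 := by
            have hz : ∀ j, carMeasure 𝒮 ζ (N ∩ U j) = 0 := fun j =>
              car_null_of_top_density hτ h2 h5 (hU j).1 (hU j).2
                inter_subset_right (fun x hx => hx.1.2) hpad
            simp [hz]
    have := hac N (by rwa [inter_eq_self_of_subset_right hNA])
    rwa [inter_eq_self_of_subset_right hNA] at this
  · exact fun h => absContOn_of_density_null h
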